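/- arXiv:1309.3441 — 2 statements merged into one kernel-verified Lean document; each statement's English description precedes it below -/
import Mathlib

section
/- Let w be a finite word over an alphabet A_k with k letters, and let K_w be the minimal length of a suffix of w that occurs only once as a subword of w. Then for all n with 1 ≤ n < K_w, p_w(n+1) − p_w(n) ≤ k · (p_w(n) − p_w(n−1)). -/
/-- The subword complexity of a finite word `w`: the number of distinct
subwords (contiguous factors) of `w` of length `n`. -/
noncomputable def complexity {A : Type*} (w : List A) (n : ℕ) : ℕ :=
  Set.ncard {u : List A | u.length = n ∧ u <:+: w}

/-- The number of occurrences of `u` in `w`: the number of starting positions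
`i` at which the contiguous block of `w` of length `|u|` equals `u`. -/
noncomputable def occCount {A : Type*} (w u : List A) : ℕ :=
  Set.ncard {i : ℕ | i + u.length ≤ w.length ∧ (w.drop i).take u.length = u}

namespace ComplexityAux

variable {A : Type*}

lemma infix_iff_occ {w u : List A} :
    u <:+: w ↔ ∃ i, i + u.length ≤ w.length ∧ (w.drop i).take u.length = u := by
  constructor
  · rintro ⟨s, t, rfl⟩
    refine ⟨s.length, by simp only [List.length_append]; omega, ?_⟩
    rw [List.append_assoc, List.drop_left, List.take_left]
  · rintro ⟨i, hi, hu⟩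
    have h1 : u <+: w.drop i := by
      rw [← hu]; exact List.take_prefix _ _
    exact h1.isInfix.trans (List.drop_suffix i w).isInfix

lemma exists_ext {w : List A} {K : ℕ}
    (hK : IsLeast {m | ∃ u : List A, u.length = m ∧ u <:+ w ∧ occCount w u = 1} K)
    {u : List A} (hu : u <:+: w) (hm : u.length < K) : ∃ a, u ++ [a] <:+: w := by
  by_cases hex : ∃ i, (i + u.length ≤ w.length ∧ (w.drop i).take u.length = u) ∧
      i + u.length < w.length
  · obtain ⟨i, ⟨hi1, hi2⟩, hi3⟩ := hex
    refine ⟨w[i + u.length]'hi3, ?_⟩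
    rw [infix_iff_occ]
    refine ⟨i, by simp; omega, ?_⟩
    have hlen : (u ++ [w[i + u.length]'hi3]).length = u.length + 1 := by simp
    rw [hlen, List.take_succ, hi2]
    congr 1
    rw [List.getElem?_drop, List.getElem?_eq_getElem hi3]
    rfl
  · exfalso
    push_neg at hex
    obtain ⟨i, hi, hti⟩ := infix_iff_occ.1 hu
    have hieq : i + u.length = w.length := le_antisymm hi (hex i ⟨hi, hti⟩)
    have hsuf : u <:+ w := by
      have hud : u = w.drop i := by
        rw [← hti]
        apply List.take_of_length_le
        rw [List.length_drop]; omega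
      rw [hud]; exact List.drop_suffix i w
    have hocc : occCount w u = 1 := by
      have hset : {j : ℕ | j + u.length ≤ w.length ∧ (w.drop j).take u.length = u} = {i} := by
        ext j
        simp only [Set.mem_setOf_eq, Set.mem_singleton_iff]
        constructor
        · rintro ⟨h1, h2⟩
          have := hex j ⟨h1, h2⟩
          omega
        · rintro rfl; exact ⟨hi, hti⟩
      rw [occCount, hset, Set.ncard_singleton]
    exact absurd (hK.2 ⟨u, rfl, hsuf, hocc⟩) (by omega)

lemma finite_infixes (w : List A) (n : ℕ) : {u : List A | u.length = n ∧ u <:+: w}.Finite :=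
  Set.Finite.subset w.sublists.finite_toSet (fun _ hu => List.mem_sublists.2 hu.2.sublist)

noncomputable def F (w : List A) (n : ℕ) : Finset (List A) := (finite_infixes w n).toFinset

lemma mem_F {w u : List A} {n : ℕ} : u ∈ F w n ↔ u.length = n ∧ u <:+: w := by
  simp [F]

lemma complexity_eq (w : List A) (n : ℕ) : complexity w n = (F w n).card := by
  rw [complexity, F, Set.ncard_eq_toFinset_card _ (finite_infixes w n)]

lemma dropLast_tail_comm (l : List A) : l.tail.dropLast = l.dropLast.tail := by
  rw [List.dropLast_eq_take, List.dropLast_eq_take, ← List.drop_one, ← List.drop_one,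
    List.drop_take]
  congr 1
  rw [List.length_drop]

lemma eq_of_tail_dropLast {x y : List A} (hx : 2 ≤ x.length) (hy : 2 ≤ y.length)
    (h1 : x.tail = y.tail) (h2 : x.dropLast = y.dropLast) : x = y := by
  match x, y with
  | a :: b :: t, c :: d :: s =>
    simp only [List.tail_cons] at h1
    simp only [List.dropLast_cons₂, List.cons.injEq] at h2
    rw [h2.1, h1]

end ComplexityAux

open ComplexityAux in
/-- Let `K` be the minimal length of a suffix of `w` that occurs exactly once
in `w`. Then for `1 ≤ n < K`, `p_w(n+1) - p_w(n) ≤ k * (p_w(n) - p_w(n-1))`,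
where `k` is the size of the alphabet. -/
theorem complexity_diff_le {A : Type*} [Fintype A] (k : ℕ)
    (hk : Fintype.card A = k) (w : List A) (K : ℕ)
    (hK : IsLeast {m | ∃ u : List A, u.length = m ∧ u <:+ w ∧ occCount w u = 1} K)
    (n : ℕ) (h1 : 1 ≤ n) (h2 : n < K) :
    (complexity w (n + 1) : ℤ) - complexity w n ≤
      k * ((complexity w n : ℤ) - complexity w (n - 1)) := by
  classical
  obtain ⟨m, rfl⟩ : ∃ m, n = m + 1 := ⟨n - 1, by omega⟩
  have hm1 : m + 1 + 1 - 1 = m + 1 := rfl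
  -- w is long
  have hwlen : K ≤ w.length := by
    obtain ⟨u₀, hu₀l, hu₀s, -⟩ := hK.1
    exact hu₀l ▸ hu₀s.length_le
  -- fiber counts
  set fib1 : List A → ℕ := fun u => ((F w (m + 2)).filter fun x => x.dropLast = u).card with hfib1
  set fib2 : List A → ℕ := fun v => ((F w (m + 1)).filter fun y => y.dropLast = v).card with hfib2
  -- membership helpers
  have hdropLast_mem : ∀ j : ℕ, ∀ x ∈ F w (j + 1), x.dropLast ∈ F w j := by
    intro j x hx
    rw [mem_F] at hx ⊢
    exact ⟨by simp [hx.1], (List.dropLast_prefix x).isInfix.trans hx.2⟩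
  have htail_mem : ∀ j : ℕ, ∀ x ∈ F w (j + 1), x.tail ∈ F w j := by
    intro j x hx
    rw [mem_F] at hx ⊢
    exact ⟨by simp [hx.1], (List.tail_suffix x).isInfix.trans hx.2⟩
  -- decomposition of cardinalities
  have hcard1 : (F w (m + 2)).card = ∑ u ∈ F w (m + 1), fib1 u :=
    Finset.card_eq_sum_card_fiberwise (hdropLast_mem (m + 1))
  have hcard2 : (F w (m + 1)).card = ∑ v ∈ F w m, fib2 v :=
    Finset.card_eq_sum_card_fiberwise (hdropLast_mem m)
  -- every short subword extends right
  have hext : ∀ j : ℕ, j < K → ∀ u ∈ F w j,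
      1 ≤ ((F w (j + 1)).filter fun x => x.dropLast = u).card := by
    intro j hj u hu
    rw [mem_F] at hu
    obtain ⟨a, ha⟩ := exists_ext hK hu.2 (hu.1 ▸ hj)
    refine Finset.card_pos.2 ⟨u ++ [a], Finset.mem_filter.2 ⟨?_, List.dropLast_concat ..⟩⟩
    rw [mem_F]
    exact ⟨by simp [hu.1], ha⟩
  have hfib1_pos : ∀ u ∈ F w (m + 1), 1 ≤ fib1 u := hext (m + 1) h2
  have hfib2_pos : ∀ v ∈ F w m, 1 ≤ fib2 v := hext m (by omega)
  -- fib1 u ≤ fib2 (tail u)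
  have hfib_le : ∀ u ∈ F w (m + 1), fib1 u ≤ fib2 u.tail := by
    intro u hu
    apply Finset.card_le_card_of_injOn List.tail
    · intro x hx
      rw [Finset.mem_coe, Finset.mem_filter] at hx ⊢
      refine ⟨htail_mem (m + 1) x hx.1, ?_⟩
      rw [dropLast_tail_comm, hx.2]
    · intro x hx y hy hxy
      simp only [Finset.coe_filter, Set.mem_setOf_eq, mem_F] at hx hy
      exact eq_of_tail_dropLast (by omega) (by omega)
        hxy (hx.2.trans hy.2.symm)
  -- at most k words of length m+1 share a given tail
  have hfiber_le : ∀ v : List A, ((F w (m + 1)).filter fun u => u.tail = v).card ≤ k := by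
    intro v
    rw [← hk]
    have hwne : w ≠ [] := List.ne_nil_of_length_pos (by omega)
    haveI : Inhabited A := ⟨w.head hwne⟩
    calc ((F w (m + 1)).filter fun u => u.tail = v).card
          ≤ (Finset.univ : Finset A).card := by
            apply Finset.card_le_card_of_injOn (fun u => u.headI)
            · intro _ _; exact Finset.mem_univ _
            · intro x hx y hy hxy
              simp only [Finset.coe_filter, Set.mem_setOf_eq, mem_F] at hx hy
              match x, y with
              | [], _ => simp at hx
              | _, [] => simp at hy
              | a :: t, b :: s =>
                simp only [List.headI] at hxy
                simp only [List.tail_cons] at hx hy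
                rw [hxy, hx.2, hy.2]
        _ = Fintype.card A := Finset.card_univ
  -- sum regrouping by tail
  have hregroup : ∑ u ∈ F w (m + 1), ((fib1 u : ℤ) - 1)
      = ∑ v ∈ F w m, ∑ u ∈ (F w (m + 1)).filter fun u => u.tail = v, ((fib1 u : ℤ) - 1) :=
    (Finset.sum_fiberwise_of_maps_to (htail_mem m) _).symm
  -- key inequality
  have hkey : ∑ u ∈ F w (m + 1), ((fib1 u : ℤ) - 1)
      ≤ k * ∑ v ∈ F w m, ((fib2 v : ℤ) - 1) := by
    rw [hregroup, Finset.mul_sum]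
    apply Finset.sum_le_sum
    intro v hv
    calc ∑ u ∈ (F w (m + 1)).filter fun u => u.tail = v, ((fib1 u : ℤ) - 1)
        ≤ ∑ _u ∈ (F w (m + 1)).filter fun u => u.tail = v, ((fib2 v : ℤ) - 1) := by
          apply Finset.sum_le_sum
          intro u hu
          rw [Finset.mem_filter] at hu
          have := hfib_le u hu.1
          rw [hu.2] at this
          omega
      _ = (((F w (m + 1)).filter fun u => u.tail = v).card : ℤ) * ((fib2 v : ℤ) - 1) := by
          rw [Finset.sum_const, nsmul_eq_mul]
      _ ≤ (k : ℤ) * ((fib2 v : ℤ) - 1) := by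
          apply mul_le_mul_of_nonneg_right
          · exact_mod_cast hfiber_le v
          · have := hfib2_pos v hv
            omega
  -- convert everything
  have hred : m + 1 - 1 = m := rfl
  rw [hred, complexity_eq w (m + 1 + 1), complexity_eq w (m + 1), complexity_eq w m]
  have e1 : ((F w (m + 1 + 1)).card : ℤ) - (F w (m + 1)).card
      = ∑ u ∈ F w (m + 1), ((fib1 u : ℤ) - 1) := by
    rw [Finset.sum_sub_distrib, Finset.sum_const, show m + 1 + 1 = m + 2 from rfl, hcard1]
    push_cast
    ring
  have e2 : ((F w (m + 1)).card : ℤ) - (F w m).card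
      = ∑ v ∈ F w m, ((fib2 v : ℤ) - 1) := by
    rw [Finset.sum_sub_distrib, Finset.sum_const, hcard2]
    push_cast
    ring
  rw [e1, e2]
  exact hkey
end

section
/- Let w be a right-infinite word over a finite alphabet. If w is not ultimately periodic, then p_w(n) ≥ n + 1 for all n ≥ 1. -/
/-- A finite word `u` is a subword (factor) of the right-infinite word `w` if
it occurs as a contiguous block of consecutive letters of `w`. -/
def IsFactor {A : Type*} (w : ℕ → A) (u : List A) : Prop :=
  ∃ i : ℕ, u = (List.range u.length).map fun j => w (i + j)

/-- The subword complexity of a right-infinite word `w`: the number of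
distinct subwords of `w` of length `n`. -/
noncomputable def icomplexity {A : Type*} (w : ℕ → A) (n : ℕ) : ℕ :=
  Set.ncard {u : List A | u.length = n ∧ IsFactor w u}

/-- A right-infinite word is ultimately periodic if from some point on it is
periodic with some period `p ≥ 1`. -/
def UltimatelyPeriodic {A : Type*} (w : ℕ → A) : Prop :=
  ∃ p, 1 ≤ p ∧ ∃ M, ∀ i, M ≤ i → w (i + p) = w i

section MH

set_option linter.unusedSectionVars false

variable {A : Type*} [Fintype A] (w : ℕ → A)

/-- The factor of `w` of length `n` starting at position `i`. -/
private def fac (n i : ℕ) : List A := (List.range n).map fun j => w (i + j)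

private lemma fac_length (n i : ℕ) : (fac w n i).length = n := by
  simp [fac]

private lemma fac_eq_iff {n i j : ℕ} :
    fac w n i = fac w n j ↔ ∀ t < n, w (i + t) = w (j + t) := by
  simp [fac, List.map_inj_left, List.mem_range]

private lemma fac_eq_ofFn (n i : ℕ) :
    fac w n i = List.ofFn (fun j : Fin n => w (i + j)) := by
  apply List.ext_getElem
  · simp [fac]
  · intro k h1 h2
    simp [fac]

private lemma factorSet_eq (n : ℕ) :
    {u : List A | u.length = n ∧ IsFactor w u} = Set.range (fac w n) := by
  ext u
  constructor
  · rintro ⟨hl, i, hi⟩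
    refine ⟨i, ?_⟩
    rw [hi, hl]
    rfl
  · rintro ⟨i, rfl⟩
    exact ⟨fac_length w n i, ⟨i, by rw [fac_length]; rfl⟩⟩

private lemma fac_range_finite (n : ℕ) : (Set.range (fac w n)).Finite := by
  apply (Set.finite_range (List.ofFn : (Fin n → A) → List A)).subset
  rintro _ ⟨i, rfl⟩
  exact ⟨_, (fac_eq_ofFn w n i).symm⟩

private lemma take_fac (m i : ℕ) : (fac w (m + 1) i).take m = fac w m i := by
  simp [fac, ← List.map_take, List.take_range, Nat.min_eq_left (Nat.le_succ m)]

private lemma periodic_of_card_le (m : ℕ)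
    (hle : (Set.range (fac w (m + 1))).ncard ≤ (Set.range (fac w m)).ncard) :
    UltimatelyPeriodic w := by
  -- the truncation map is surjective from length-(m+1) factors onto length-m factors
  have himg : (fun u : List A => u.take m) '' Set.range (fac w (m + 1))
      = Set.range (fac w m) := by
    ext u
    constructor
    · rintro ⟨_, ⟨i, rfl⟩, rfl⟩
      exact ⟨i, (take_fac w m i).symm⟩
    · rintro ⟨i, rfl⟩
      exact ⟨fac w (m + 1) i, ⟨i, rfl⟩, take_fac w m i⟩
  -- hence it is injective on that set
  have hinj : Set.InjOn (fun u : List A => u.take m) (Set.range (fac w (m + 1))) := by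
    have h2 : (Set.range (fac w m)).ncard ≤ (Set.range (fac w (m + 1))).ncard := by
      rw [← himg]
      exact Set.ncard_image_le (fac_range_finite w (m + 1))
    apply Set.injOn_of_ncard_image_eq _ (fac_range_finite w (m + 1))
    rw [himg]
    omega
  -- determinism: equal length-m factors have equal (m+1)-extensions
  have hdet : ∀ i j, fac w m i = fac w m j → fac w (m + 1) i = fac w (m + 1) j := by
    intro i j hij
    apply hinj ⟨i, rfl⟩ ⟨j, rfl⟩
    simpa only [take_fac] using hij
  -- propagate: equal length-m factors force equality of all later letters
  have hprop : ∀ i j, fac w m i = fac w m j → ∀ t, fac w m (i + t) = fac w m (j + t) := by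
    intro i j hij t
    induction t with
    | zero => simpa using hij
    | succ t ih =>
      have h1 := (fac_eq_iff w).1 (hdet _ _ ih)
      rw [fac_eq_iff]
      intro s hs
      have : i + t + (s + 1) = i + (t + 1) + s := by ring
      have h2 := h1 (s + 1) (by omega)
      calc w (i + (t + 1) + s) = w (i + t + (s + 1)) := by ring_nf
        _ = w (j + t + (s + 1)) := h2
        _ = w (j + (t + 1) + s) := by ring_nf
  -- pigeonhole: two positions with the same length-m factor
  obtain ⟨i, -, j, -, hne, heq⟩ :=
    Set.infinite_univ.exists_ne_map_eq_of_mapsTo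
      (fun i _ => Set.mem_range_self i) (fac_range_finite w m)
  wlog hij : i < j generalizing i j
  · exact this j i hne.symm heq.symm (by omega)
  refine ⟨j - i, by omega, i, ?_⟩
  intro k hk
  have ht : k = i + (k - i) := by omega
  have h1 := (fac_eq_iff w).1 (hdet _ _ (hprop i j heq (k - i))) 0 (by omega)
  have : i + (k - i) + (j - i) = j + (k - i) := by omega
  rw [ht]
  calc w (i + (k - i) + (j - i)) = w (j + (k - i) + 0) := by rw [this]; ring_nf
    _ = w (i + (k - i) + 0) := h1.symm
    _ = w (i + (k - i)) := by ring_nf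

end MH

/-- If a right-infinite word `w` over a finite alphabet is not ultimately
periodic, then `p_w(n) ≥ n + 1` for all `n ≥ 1`. -/
theorem icomplexity_ge_of_not_ultimatelyPeriodic {A : Type*} [Fintype A]
    (w : ℕ → A) (h : ¬ UltimatelyPeriodic w) (n : ℕ) (hn : 1 ≤ n) :
    n + 1 ≤ icomplexity w n := by
  have key : ∀ m, (Set.range (fac w m)).ncard < (Set.range (fac w (m + 1))).ncard := by
    intro m
    by_contra hc
    push_neg at hc
    exact h (periodic_of_card_le w m hc)
  have H : ∀ m, m + 1 ≤ (Set.range (fac w m)).ncard := by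
    intro m
    induction m with
    | zero =>
      have : Set.range (fac w 0) = {([] : List A)} := by
        ext u; simp [fac]
      rw [this, Set.ncard_singleton]
    | succ k ih => exact lt_of_le_of_lt ih (key k)
  rw [icomplexity, factorSet_eq]
  exact H n
end
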